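/- In the braid group B_3, a word that contains only the letters σ_1, σ_2^{±1} but never σ_1^{-1} and that contains at least one letter σ_1 (a σ_1-positive word) cannot represent the same element of B_3 as a word containing only σ_1^{-1}, σ_2^{±1} but never σ_1 with at least one σ_1^{-1} (a σ_1-negative word). -/

import Mathlib

/-- The braid relations on `m` generators `σ_0, …, σ_{m-1}` (0-based indexing). -/
def braidRels (m : ℕ) : Set (FreeGroup (Fin m)) :=
  {r | (∃ i j : Fin m, (i : ℕ) + 1 = (j : ℕ) ∧
          r = FreeGroup.of i * FreeGroup.of j * FreeGroup.of i *
              (FreeGroup.of j * FreeGroup.of i * FreeGroup.of j)⁻¹) ∨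
       (∃ i j : Fin m, (i : ℕ) + 2 ≤ (j : ℕ) ∧
          r = FreeGroup.of i * FreeGroup.of j * (FreeGroup.of i * FreeGroup.of j)⁻¹)}

/-- The braid group `B_n`, with Artin generators indexed (0-based) by `Fin (n-1)`. -/
abbrev BraidGroup (n : ℕ) := PresentedGroup (braidRels (n - 1))

/-- The Artin generator `σ_{i+1}` in 1-based notation, i.e. the `i`-th generator 0-based;
returns `1` for out-of-range indices. -/
def braidGen (n i : ℕ) : BraidGroup n :=
  if h : i < n - 1 then PresentedGroup.of ⟨i, h⟩ else 1

/-- Evaluation of a word: a letter `(i, true)` is `σ_i` (0-based) and `(i, false)` is `σ_i⁻¹`. -/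
def evalWord (n : ℕ) (w : List (ℕ × Bool)) : BraidGroup n :=
  (w.map fun p => if p.2 then braidGen n p.1 else (braidGen n p.1)⁻¹).prod

/-- `k`-fold concatenation (power) of a word. -/
def wpow (u : List (ℕ × Bool)) (k : ℕ) : List (ℕ × Bool) :=
  (List.replicate k u).flatten

/-- The semicircular word `σ_i^ε σ_{i±1}^ε ⋯ σ_j^ε` (0-based indices, `true` = positive sign). -/
def semiWord (i j : ℕ) (ε : Bool) : List (ℕ × Bool) :=
  if i ≤ j then (List.range (j - i + 1)).map fun t => (i + t, ε)
  else (List.range (i - j + 1)).map fun t => (i - t, ε)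

/-- The semicircular move as an element of the braid group. -/
def semiMove (n i j : ℕ) (ε : Bool) : BraidGroup n := evalWord n (semiWord i j ε)

/-- Letter `σ_1` of `B_3` (0-based index 0). -/
def A : ℕ × Bool := (0, true)
/-- Letter `σ_1⁻¹`. -/
def A' : ℕ × Bool := (0, false)
/-- Letter `σ_2`. -/
def B : ℕ × Bool := (1, true)
/-- Letter `σ_2⁻¹`. -/
def B' : ℕ × Bool := (1, false)

/-- A word in the letters `σ_1^{±1}, σ_2^{±1}` of `B_3`. -/
def ValidWord3 (w : List (ℕ × Bool)) : Prop := ∀ l ∈ w, l.1 < 2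

/-- A word is geodesic if no strictly shorter word in the generators `σ_1^{±1}, σ_2^{±1}`
represents the same element of `B_3`. -/
def Geodesic3 (w : List (ℕ × Bool)) : Prop :=
  ∀ w', ValidWord3 w' → evalWord 3 w' = evalWord 3 w → w.length ≤ w'.length

/-- A `σ_1`-positive word: contains `σ_1` but never `σ_1⁻¹`. -/
def SigmaOnePos (w : List (ℕ × Bool)) : Prop := ValidWord3 w ∧ A ∈ w ∧ A' ∉ w

/-- A `σ_1`-negative word: contains `σ_1⁻¹` but never `σ_1`. -/
def SigmaOneNeg (w : List (ℕ × Bool)) : Prop := ValidWord3 w ∧ A' ∈ w ∧ A ∉ w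

namespace Dh

abbrev L := Bool × Bool

def linv (l : L) : L := (l.1, !l.2)

@[simp] lemma linv_linv (l : L) : linv (linv l) = l := by cases l; simp [linv]

inductive Red : List L → Prop
  | nil : Red []
  | single (l : L) : Red [l]
  | cons {a b : L} {t : List L} : b ≠ linv a → Red (b :: t) → Red (a :: b :: t)

lemma red_tail {l : L} {t : List L} (h : Red (l :: t)) : Red t := by
  cases h with
  | single => exact Red.nil
  | cons _ h2 => exact h2

lemma red_head? {l : L} {t : List L} (h : Red (l :: t)) : t.head? ≠ some (linv l) := by
  cases h with
  | single => simp
  | cons hne _ => simpa using fun he => hne he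

def cons' (l : L) : List L → List L
  | [] => [l]
  | (m :: t) => if m = linv l then t else l :: m :: t

def mulW (a b : List L) : List L := a.foldr cons' b

def invW (a : List L) : List L := (a.map linv).reverse

def app (f : L → List L) (w : List L) : List L :=
  w.foldr (fun l acc => mulW (f l) acc) []

@[simp] lemma app_nil (f : L → List L) : app f [] = [] := rfl

@[simp] lemma app_cons (f : L → List L) (l : L) (w : List L) :
    app f (l :: w) = mulW (f l) (app f w) := rfl

@[simp] lemma mulW_nil_left (b : List L) : mulW [] b = b := rfl

@[simp] lemma mulW_cons_left (l : L) (a b : List L) :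
    mulW (l :: a) b = cons' l (mulW a b) := rfl

lemma red_cons' {w : List L} (l : L) (h : Red w) : Red (cons' l w) := by
  cases w with
  | nil => exact Red.single l
  | cons m t =>
    by_cases hm : m = linv l
    · simpa [cons', hm] using red_tail h
    · simpa [cons', hm] using Red.cons (by simpa using hm) h

lemma red_mulW {b : List L} (a : List L) (h : Red b) : Red (mulW a b) := by
  induction a with
  | nil => exact h
  | cons l a ih => exact red_cons' l ih

lemma red_app (f : L → List L) (w : List L) : Red (app f w) := by
  induction w with
  | nil => exact Red.nil
  | cons l w ih => exact red_mulW _ ih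

lemma cons'_cons' {w : List L} (l : L) (h : Red w) : cons' l (cons' (linv l) w) = w := by
  cases w with
  | nil => simp [cons']
  | cons m t =>
    by_cases hm : m = linv (linv l)
    · subst hm
      have := red_head? h
      simp only [linv_linv] at *
      cases t with
      | nil => simp [cons']
      | cons m2 t2 =>
        have hm2 : m2 ≠ linv l := by simpa using this
        simp [cons', hm2]
    · simp only [linv_linv] at hm
      simp [cons', hm]

lemma mulW_append (a1 a2 b : List L) : mulW (a1 ++ a2) b = mulW a1 (mulW a2 b) := by
  simp [mulW, List.foldr_append]

lemma invW_cons (l : L) (a : List L) : invW (l :: a) = invW a ++ [linv l] := by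
  simp [invW]

lemma mulW_cons'_left {c : List L} (l : L) (z : List L) (hc : Red c) :
    mulW (cons' l z) c = cons' l (mulW z c) := by
  cases z with
  | nil => simp [cons']
  | cons m t =>
    by_cases hm : m = linv l
    · subst hm
      simp only [cons', if_pos rfl, mulW_cons_left]
      exact (cons'_cons' l (red_mulW t hc)).symm
    · simp [cons', hm]

lemma mulW_assoc {c : List L} (u v : List L) (hc : Red c) :
    mulW (mulW u v) c = mulW u (mulW v c) := by
  induction u with
  | nil => rfl
  | cons l u ih =>
    simp only [mulW_cons_left]
    rw [mulW_cons'_left l (mulW u v) hc, ih]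

lemma mulW_inv_left {b : List L} (u : List L) (hb : Red b) :
    mulW (invW u) (mulW u b) = b := by
  induction u with
  | nil => rfl
  | cons l u ih =>
    rw [invW_cons, mulW_append]
    simp only [mulW_cons_left, mulW_nil_left]
    have : cons' (linv l) (cons' l (mulW u b)) = mulW u b := by
      have := cons'_cons' (linv l) (red_mulW u hb)
      simpa using this
    rw [this, ih]

lemma mulW_inv_right (u : List L) : ∀ b : List L, Red b → mulW u (mulW (invW u) b) = b := by
  induction u with
  | nil => intro b _; rfl
  | cons l u ih =>
    intro b hb
    rw [invW_cons, mulW_append]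
    simp only [mulW_cons_left, mulW_nil_left]
    rw [ih _ (red_cons' _ hb), cons'_cons' l hb]

def InvComp (f : L → List L) : Prop := ∀ l, f (linv l) = invW (f l)

lemma app_cons' {w : List L} {f : L → List L} (hf : InvComp f) (l : L) (h : Red w) :
    app f (cons' l w) = mulW (f l) (app f w) := by
  cases w with
  | nil => simp [cons']
  | cons m t =>
    by_cases hm : m = linv l
    · subst hm
      have h1 : cons' l (linv l :: t) = t := by simp [cons']
      rw [h1, app_cons, hf l, mulW_inv_right (f l) _ (red_app f t)]
    · simp [cons', hm]

lemma app_mulW {b : List L} {f : L → List L} (hf : InvComp f) (a : List L) (hb : Red b) :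
    app f (mulW a b) = mulW (app f a) (app f b) := by
  induction a with
  | nil => rfl
  | cons l a ih =>
    simp only [mulW_cons_left, app_cons]
    rw [app_cons' hf l (red_mulW a hb), ih,
      mulW_assoc (f l) (app f a) (red_app f b)]

lemma app_app {f g : L → List L} (hg : InvComp g) (w : List L) :
    app g (app f w) = app (fun l => app g (f l)) w := by
  induction w with
  | nil => rfl
  | cons l w ih =>
    simp only [app_cons]
    rw [app_mulW hg (f l) (red_app f w), ih]

lemma app_id {w : List L} {f : L → List L} (hf : ∀ l, f l = [l]) (h : Red w) :
    app f w = w := by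
  induction w with
  | nil => rfl
  | cons l w ih =>
    simp only [app_cons, hf l]
    rw [ih (red_tail h)]
    have := red_head? h
    cases w with
    | nil => rfl
    | cons m t =>
      have hm : m ≠ linv l := by simpa using this
      simp [mulW, cons', hm]


/-- Artin-type action of σ₁ on F₂ = ⟨x,y⟩ : x ↦ xy, y ↦ y.
Letters: (false,b) = x^{±1}, (true,b) = y^{±1}; b=true is positive. -/
def f1 : L → List L
  | (false, true) => [(false, true), (true, true)]
  | (false, false) => [(true, false), (false, false)]
  | (true, b) => [(true, b)]

/-- action of σ₁⁻¹ : x ↦ xy⁻¹, y ↦ y. -/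
def f1i : L → List L
  | (false, true) => [(false, true), (true, false)]
  | (false, false) => [(true, true), (false, false)]
  | (true, b) => [(true, b)]

/-- action of σ₂^{±1} : x ↦ x, y ↦ y·x^{∓1}; σ₂ is `fe false`, σ₂⁻¹ is `fe true`. -/
def fe (ε : Bool) : L → List L
  | (true, true) => [(true, true), (false, ε)]
  | (true, false) => [(false, !ε), (true, false)]
  | (false, b) => [(false, b)]

lemma invComp_f1 : InvComp f1 := by intro l; revert l; decide
lemma invComp_f1i : InvComp f1i := by intro l; revert l; decide
lemma invComp_fe (ε : Bool) : InvComp (fe ε) := by intro l; revert l ε; decide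

lemma eq_cons_of_head? {z : List L} {a : L} (h : z.head? = some a) : ∃ z', z = a :: z' := by
  cases z with
  | nil => simp at h
  | cons b t =>
    have hb : b = a := by simpa using h
    exact ⟨t, by rw [hb]⟩

lemma cons'_of_ne {l : L} {z : List L} (h : z.head? ≠ some (linv l)) : cons' l z = l :: z := by
  cases z with
  | nil => rfl
  | cons m t =>
    have : m ≠ linv l := fun he => h (by simp [he])
    simp [cons', this]

lemma cons'_of_eq (l : L) (z : List L) : cons' l (linv l :: z) = z := by simp [cons']

/-- head predictor for `app (fe ε)`. -/
def Fe (ε : Bool) : List L → Option L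
  | [] => none
  | (true, true) :: _ => some (true, true)
  | (true, false) :: _ => some (false, !ε)
  | (false, b) :: t =>
    if b = ε then
      (match t with
       | (true, false) :: _ => some (true, false)
       | _ => some (false, b))
    else some (false, b)

/-- head predictor for `app f1`. -/
def F1 : List L → Option L
  | [] => none
  | (false, true) :: _ => some (false, true)
  | (false, false) :: _ => some (true, false)
  | (true, false) :: _ => some (true, false)
  | (true, true) :: t =>
    match t with
    | (false, false) :: _ => some (false, false)
    | _ => some (true, true)

lemma Fe_src_yp {ε : Bool} {t : List L} (h : Fe ε t = some (true, true)) :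
    t.head? = some (true, true) := by
  rcases t with _ | ⟨⟨g, s⟩, t2⟩
  · simp [Fe] at h
  · cases g <;> cases s <;>
      rcases t2 with _ | ⟨⟨g2, s2⟩, t3⟩ <;>
        first
          | (simp_all [Fe]; done)
          | (by_cases hb : (false : Bool) = ε <;> by_cases hb2 : (true : Bool) = ε <;>
              cases g2 <;> cases s2 <;> simp_all [Fe])

lemma Fe_src_ym {ε : Bool} {t : List L} (h : Fe ε t = some (true, false)) :
    t.head? = some (false, ε) := by
  rcases t with _ | ⟨⟨g, s⟩, t2⟩
  · simp [Fe] at h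
  · cases g <;> cases s <;>
      rcases t2 with _ | ⟨⟨g2, s2⟩, t3⟩ <;>
        first
          | (simp_all [Fe]; done)
          | (by_cases hb : (false : Bool) = ε <;> by_cases hb2 : (true : Bool) = ε <;>
              cases g2 <;> cases s2 <;> simp_all [Fe])

lemma Fe_src_x {ε : Bool} {t : List L} {c : Bool} (h : Fe ε t = some (false, c)) :
    t.head? = some (false, c) ∨ (c = !ε ∧ t.head? = some (true, false)) := by
  rcases t with _ | ⟨⟨g, s⟩, t2⟩
  · simp [Fe] at h
  · cases g <;> cases s <;>
      rcases t2 with _ | ⟨⟨g2, s2⟩, t3⟩ <;>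
        first
          | (simp_all [Fe]; done)
          | (by_cases hb : (false : Bool) = ε <;> by_cases hb2 : (true : Bool) = ε <;>
              cases g2 <;> cases s2 <;> simp_all [Fe])

lemma F1_src_yp {t : List L} (h : F1 t = some (true, true)) : t.head? = some (true, true) := by
  rcases t with _ | ⟨⟨g, s⟩, t2⟩
  · simp [F1] at h
  · cases g <;> cases s <;>
      rcases t2 with _ | ⟨⟨g2, s2⟩, t3⟩ <;>
        first
          | (simp_all [F1]; done)
          | (cases g2 <;> cases s2 <;> simp_all [F1])

lemma F1_src_ym {t : List L} (h : F1 t = some (true, false)) :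
    t.head? = some (true, false) ∨ t.head? = some (false, false) := by
  rcases t with _ | ⟨⟨g, s⟩, t2⟩
  · simp [F1] at h
  · cases g <;> cases s <;>
      rcases t2 with _ | ⟨⟨g2, s2⟩, t3⟩ <;>
        first
          | (simp_all [F1]; done)
          | (cases g2 <;> cases s2 <;> simp_all [F1])

lemma F1_src_xm {t : List L} (h : F1 t = some (false, false)) : t.head? = some (true, true) := by
  rcases t with _ | ⟨⟨g, s⟩, t2⟩
  · simp [F1] at h
  · cases g <;> cases s <;>
      rcases t2 with _ | ⟨⟨g2, s2⟩, t3⟩ <;>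
        first
          | (simp_all [F1]; done)
          | (cases g2 <;> cases s2 <;> simp_all [F1])

lemma F1_src_xp {t : List L} (h : F1 t = some (false, true)) : t.head? = some (false, true) := by
  rcases t with _ | ⟨⟨g, s⟩, t2⟩
  · simp [F1] at h
  · cases g <;> cases s <;>
      rcases t2 with _ | ⟨⟨g2, s2⟩, t3⟩ <;>
        first
          | (simp_all [F1]; done)
          | (cases g2 <;> cases s2 <;> simp_all [F1])

lemma bne_some {a b : L} (hab : a ≠ b) {z : List L} (hz : z.head? = some a) :
    z.head? ≠ some b := by rw [hz]; simpa using hab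

lemma master_e (ε : Bool) :
    ∀ n (v : List L), v.length ≤ n → Red v → (app (fe ε) v).head? = Fe ε v := by
  intro n
  induction n with
  | zero =>
    intro v hlen _
    have hv : v = [] := by cases v <;> simp_all
    subst hv; rfl
  | succ n ih =>
    intro v hlen hred
    rcases v with _ | ⟨⟨g, s⟩, t⟩
    · rfl
    · have ht : Red t := red_tail hred
      have hh := red_head? hred
      have hlt : t.length ≤ n := by simp at hlen; omega
      have iht := ih t hlt ht
      cases g with
      | false =>
        have happ : app (fe ε) ((false, s) :: t) = cons' (false, s) (app (fe ε) t) := rfl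
        rcases t with _ | ⟨⟨g1, s1⟩, t2⟩
        · by_cases hb : s = ε <;> simp [happ, app, mulW, cons', Fe, fe, hb]
        · cases g1 with
          | true =>
            cases s1 with
            | true =>
              -- t = y⁺ :: t2 : no cancellation
              have hz : (app (fe ε) ((true, true) :: t2)).head? = some (true, true) := by
                rw [iht]; rfl
              have hne : (app (fe ε) ((true, true) :: t2)).head? ≠ some (linv (false, s)) :=
                bne_some (by simp [linv]) hz
              rw [happ, cons'_of_ne hne, List.head?_cons]
              by_cases hb : s = ε <;> simp [Fe, hb]
            | false =>
              -- t = y⁻ :: t2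
              have ht2 : Red t2 := red_tail ht
              have hh2 := red_head? ht
              have hlt2 : t2.length ≤ n := by simp at hlen; omega
              have iht2 := ih t2 hlt2 ht2
              have hz2 : (app (fe ε) t2).head? ≠ some (linv (true, false)) := by
                rw [iht2]; intro hcon
                apply hh2
                rw [Fe_src_yp (by simpa [linv] using hcon)]
                simp [linv]
              have hzy : app (fe ε) ((true, false) :: t2) =
                  (false, !ε) :: (true, false) :: app (fe ε) t2 := by
                show mulW [(false, !ε), (true, false)] (app (fe ε) t2) = _
                simp only [mulW_cons_left, mulW_nil_left]
                rw [cons'_of_ne hz2, cons'_of_ne (by simp [linv])]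
              by_cases hb : s = ε
              · subst hb
                rw [happ, hzy]
                have hcan : cons' (false, s) ((false, !s) :: (true, false) :: app (fe s) t2) =
                    (true, false) :: app (fe s) t2 := by
                  have h0 := cons'_of_eq (false, s) ((true, false) :: app (fe s) t2)
                  simpa [linv] using h0
                rw [hcan]
                simp [Fe]
              · have hne2 : ((false, !ε) :: (true, false) :: app (fe ε) t2).head? ≠
                    some (linv (false, s)) := by
                  simp only [List.head?_cons]
                  simp [linv]; cases s <;> cases ε <;> simp_all
                rw [happ, hzy, cons'_of_ne hne2, List.head?_cons]
                simp [Fe, hb]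
          | false =>
            -- t = (false, s1) :: t2, reducedness forces s1 = s
            have hcs : s1 = s := by
              have hx : (false, s1) ≠ linv (false, s) := by
                intro he; exact hh (by simp [he])
              cases s <;> cases s1 <;> simp_all [linv]
            subst hcs
            by_cases hb : s1 = ε
            · subst hb
              have hzne : (app (fe s1) ((false, s1) :: t2)).head? ≠ some (linv (false, s1)) := by
                rw [iht]
                rcases t2 with _ | ⟨⟨g2, s2⟩, t3⟩
                · simp [Fe, linv] <;> (cases s1 <;> simp)
                · cases g2 <;> cases s2 <;> (simp [Fe, linv]; try (cases s1 <;> simp))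
              rw [happ, cons'_of_ne hzne, List.head?_cons]
              simp [Fe]
            · have hzx : (app (fe ε) ((false, s1) :: t2)).head? = some (false, s1) := by
                rw [iht]; simp [Fe, hb]
              have hne : (app (fe ε) ((false, s1) :: t2)).head? ≠ some (linv (false, s1)) :=
                bne_some (by simp [linv] <;> (cases s1 <;> simp)) hzx
              rw [happ, cons'_of_ne hne, List.head?_cons]
              simp [Fe, hb]
      | true =>
        cases s with
        | false =>
          -- letter y⁻, image [(false,!ε), (true,false)]
          have hz : (app (fe ε) t).head? ≠ some (linv (true, false)) := by
            rw [iht]; intro hcon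
            apply hh
            rw [Fe_src_yp (by simpa [linv] using hcon)]
            simp [linv]
          have happ : app (fe ε) ((true, false) :: t) =
              (false, !ε) :: (true, false) :: app (fe ε) t := by
            show mulW [(false, !ε), (true, false)] (app (fe ε) t) = _
            simp only [mulW_cons_left, mulW_nil_left]
            rw [cons'_of_ne hz, cons'_of_ne (by simp [linv])]
          rw [happ]; simp [Fe]
        | true =>
          -- letter y⁺, image [(true,true), (false,ε)]
          have happ : app (fe ε) ((true, true) :: t) =
              cons' (true, true) (cons' (false, ε) (app (fe ε) t)) := rfl
          by_cases hc : (app (fe ε) t).head? = some (false, !ε)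
          · have hsrc := Fe_src_x (ε := ε) (t := t) (c := !ε) (by rw [← iht]; exact hc)
            have hth : t.head? = some (false, !ε) := by
              rcases hsrc with h1 | ⟨_, h2⟩
              · exact h1
              · exact absurd h2 (by simpa [linv] using hh)
            obtain ⟨t2, ht2eq⟩ := eq_cons_of_head? hth
            subst ht2eq
            have ht2 : Red t2 := red_tail ht
            have hh2 := red_head? ht
            have hlt2 : t2.length ≤ n := by simp at hlen; omega
            have iht2 := ih t2 hlt2 ht2
            have hz2 : (app (fe ε) t2).head? ≠ some (false, ε) := by
              rw [iht2]; intro hcon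
              rcases Fe_src_x hcon with h1 | ⟨he, _⟩
              · exact hh2 (by rw [h1]; simp [linv])
              · exact absurd he (by cases ε <;> simp)
            have hz2' : (app (fe ε) t2).head? ≠ some (linv (false, !ε)) := by
              simpa [linv] using hz2
            have hzz : app (fe ε) ((false, !ε) :: t2) = (false, !ε) :: app (fe ε) t2 := by
              show mulW [(false, !ε)] (app (fe ε) t2) = _
              simp only [mulW_cons_left, mulW_nil_left]
              rw [cons'_of_ne hz2']
            rw [happ, hzz]
            have hcan : cons' (false, ε) ((false, !ε) :: app (fe ε) t2) = app (fe ε) t2 := by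
              have h0 := cons'_of_eq (false, ε) (app (fe ε) t2)
              simpa [linv] using h0
            rw [hcan]
            have hzym : (app (fe ε) t2).head? ≠ some (linv (true, true)) := by
              rw [iht2]; intro hcon
              have h1 := Fe_src_ym (ε := ε) (by simpa [linv] using hcon)
              exact hh2 (by rw [h1]; simp [linv])
            rw [cons'_of_ne hzym, List.head?_cons]
            simp [Fe]
          · have hc' : (app (fe ε) t).head? ≠ some (linv (false, ε)) := by
              simpa [linv] using hc
            rw [happ, cons'_of_ne hc', cons'_of_ne (by simp [linv]), List.head?_cons]
            simp [Fe]

lemma F1_yp_head (t2 : List L) : F1 ((true, true) :: t2) = some (false, false) ∨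
    F1 ((true, true) :: t2) = some (true, true) := by
  rcases t2 with _ | ⟨⟨g2, s2⟩, t3⟩
  · simp [F1]
  · cases g2 <;> cases s2 <;> simp [F1]

lemma master_1 :
    ∀ n (v : List L), v.length ≤ n → Red v → (app f1 v).head? = F1 v := by
  intro n
  induction n with
  | zero =>
    intro v hlen _
    have hv : v = [] := by cases v <;> simp_all
    subst hv; rfl
  | succ n ih =>
    intro v hlen hred
    rcases v with _ | ⟨⟨g, s⟩, t⟩
    · rfl
    · have ht : Red t := red_tail hred
      have hh := red_head? hred
      have hlt : t.length ≤ n := by simp at hlen; omega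
      have iht := ih t hlt ht
      cases g with
      | true =>
        cases s with
        | false =>
          -- letter y⁻, image [y⁻]
          have happ : app f1 ((true, false) :: t) = cons' (true, false) (app f1 t) := rfl
          have hz : (app f1 t).head? ≠ some (linv (true, false)) := by
            rw [iht]; intro hcon
            apply hh
            rw [F1_src_yp (by simpa [linv] using hcon)]
            simp [linv]
          rw [happ, cons'_of_ne hz, List.head?_cons]
          rcases t with _ | ⟨⟨g1, s1⟩, t2⟩
          · simp [F1]
          · cases g1 <;> cases s1 <;> simp_all [F1, linv]
        | true =>
          -- letter y⁺, image [y⁺]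
          have happ : app f1 ((true, true) :: t) = cons' (true, true) (app f1 t) := rfl
          rcases t with _ | ⟨⟨g1, s1⟩, t2⟩
          · simp [happ, app, mulW, cons', F1, f1, linv]
          · cases g1 with
            | true =>
              cases s1 with
              | true =>
                have hne : (app f1 ((true, true) :: t2)).head? ≠ some (linv (true, true)) := by
                  rw [iht]
                  rcases F1_yp_head t2 with h | h <;> simp [h, linv]
                rw [happ, cons'_of_ne hne, List.head?_cons]
                simp [F1]
              | false => exact absurd (by simp [linv]) hh
            | false =>
              cases s1 with
              | true =>
                have hz : (app f1 ((false, true) :: t2)).head? = some (false, true) := by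
                  rw [iht]; rfl
                have hne : (app f1 ((false, true) :: t2)).head? ≠ some (linv (true, true)) :=
                  bne_some (by simp [linv]) hz
                rw [happ, cons'_of_ne hne, List.head?_cons]
                simp [F1]
              | false =>
                -- t = x⁻ :: t2 : cancellation case
                have ht2 : Red t2 := red_tail ht
                have hh2 := red_head? ht
                have hlt2 : t2.length ≤ n := by simp at hlen; omega
                have iht2 := ih t2 hlt2 ht2
                have hz2 : (app f1 t2).head? ≠ some (linv (false, false)) := by
                  rw [iht2]; intro hcon
                  apply hh2
                  rw [F1_src_xp (by simpa [linv] using hcon)]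
                  simp [linv]
                have hzz : app f1 ((false, false) :: t2) =
                    (true, false) :: (false, false) :: app f1 t2 := by
                  show mulW [(true, false), (false, false)] (app f1 t2) = _
                  simp only [mulW_cons_left, mulW_nil_left]
                  rw [cons'_of_ne hz2, cons'_of_ne (by simp [linv])]
                rw [happ, hzz]
                have hcan : cons' (true, true) ((true, false) :: (false, false) :: app f1 t2) =
                    (false, false) :: app f1 t2 := by
                  have h0 := cons'_of_eq (true, true) ((false, false) :: app f1 t2)
                  simpa [linv] using h0
                rw [hcan, List.head?_cons]
                simp [F1]
      | false =>
        cases s with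
        | false =>
          -- letter x⁻, image [y⁻, x⁻]
          have hz : (app f1 t).head? ≠ some (linv (false, false)) := by
            rw [iht]; intro hcon
            apply hh
            rw [F1_src_xp (by simpa [linv] using hcon)]
            simp [linv]
          have happ : app f1 ((false, false) :: t) =
              (true, false) :: (false, false) :: app f1 t := by
            show mulW [(true, false), (false, false)] (app f1 t) = _
            simp only [mulW_cons_left, mulW_nil_left]
            rw [cons'_of_ne hz, cons'_of_ne (by simp [linv])]
          rw [happ]; simp [F1]
        | true =>
          -- letter x⁺, image [x⁺, y⁺]
          have happ : app f1 ((false, true) :: t) =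
              cons' (false, true) (cons' (true, true) (app f1 t)) := rfl
          rcases t with _ | ⟨⟨g1, s1⟩, t2⟩
          · simp [happ, app, mulW, cons', F1, f1, linv]
          · cases g1 with
            | false =>
              cases s1 with
              | false => exact absurd (by simp [linv]) hh
              | true =>
                have hz : (app f1 ((false, true) :: t2)).head? = some (false, true) := by
                  rw [iht]; rfl
                have hne : (app f1 ((false, true) :: t2)).head? ≠ some (linv (true, true)) :=
                  bne_some (by simp [linv]) hz
                rw [happ, cons'_of_ne hne]
                rw [cons'_of_ne (by simp [List.head?_cons, linv])]
                simp [F1]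
            | true =>
              cases s1 with
              | true =>
                have hne : (app f1 ((true, true) :: t2)).head? ≠ some (linv (true, true)) := by
                  rw [iht]
                  rcases F1_yp_head t2 with h | h <;> simp [h, linv]
                rw [happ, cons'_of_ne hne]
                rw [cons'_of_ne (by simp [List.head?_cons, linv])]
                simp [F1]
              | false =>
                -- t = y⁻ :: t2 : cancellation case
                have ht2 : Red t2 := red_tail ht
                have hh2 := red_head? ht
                have hlt2 : t2.length ≤ n := by simp at hlen; omega
                have iht2 := ih t2 hlt2 ht2
                have hz2 : (app f1 t2).head? ≠ some (linv (true, false)) := by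
                  rw [iht2]; intro hcon
                  apply hh2
                  rw [F1_src_yp (by simpa [linv] using hcon)]
                  simp [linv]
                have hzz : app f1 ((true, false) :: t2) = (true, false) :: app f1 t2 := by
                  show mulW [(true, false)] (app f1 t2) = _
                  simp only [mulW_cons_left, mulW_nil_left]
                  rw [cons'_of_ne hz2]
                rw [happ, hzz]
                have hcan : cons' (true, true) ((true, false) :: app f1 t2) = app f1 t2 := by
                  have h0 := cons'_of_eq (true, true) (app f1 t2)
                  simpa [linv] using h0
                rw [hcan]
                have hxm : (app f1 t2).head? ≠ some (linv (false, true)) := by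
                  rw [iht2]; intro hcon
                  have h1 := F1_src_xm (by simpa [linv] using hcon)
                  exact hh2 (by rw [h1]; simp [linv])
                rw [cons'_of_ne hxm, List.head?_cons]
                simp [F1]

lemma master_e' (ε : Bool) {t : List L} (h : Red t) : (app (fe ε) t).head? = Fe ε t :=
  master_e ε t.length t le_rfl h

lemma master_1' {t : List L} (h : Red t) : (app f1 t).head? = F1 t :=
  master_1 t.length t le_rfl h

/-- after an initial block of `x`'s, the word continues with `y` -/
def afterX : List L → Prop
  | (false, true) :: t => afterX t
  | (true, true) :: _ => True
  | _ => False

/-- the Larue invariant: the word has the form x^k y ⋯ with k ≥ 1 -/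
def inS : List L → Prop
  | (false, true) :: t => afterX t
  | _ => False

@[simp] lemma afterX_nil : afterX [] = False := rfl
@[simp] lemma afterX_xp (t : List L) : afterX ((false, true) :: t) = afterX t := rfl
@[simp] lemma afterX_yp (t : List L) : afterX ((true, true) :: t) = True := rfl
@[simp] lemma afterX_xm (t : List L) : afterX ((false, false) :: t) = False := rfl
@[simp] lemma afterX_ym (t : List L) : afterX ((true, false) :: t) = False := rfl

@[simp] lemma inS_nil : inS [] = False := rfl
@[simp] lemma inS_xp (t : List L) : inS ((false, true) :: t) = afterX t := rfl
@[simp] lemma inS_yp (t : List L) : inS ((true, true) :: t) = False := rfl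
@[simp] lemma inS_xm (t : List L) : inS ((false, false) :: t) = False := rfl
@[simp] lemma inS_ym (t : List L) : inS ((true, false) :: t) = False := rfl

lemma afterX_shape {t : List L} (h : afterX t) :
    (∃ t2, t = (false, true) :: t2 ∧ afterX t2) ∨ ∃ t2, t = (true, true) :: t2 := by
  rcases t with _ | ⟨⟨g, s⟩, t2⟩
  · simp at h
  · cases g with
    | false =>
      cases s with
      | false => simp at h
      | true => exact Or.inl ⟨t2, rfl, by simpa using h⟩
    | true =>
      cases s with
      | false => simp at h
      | true => exact Or.inr ⟨t2, rfl⟩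

lemma Fe_afterX (ε : Bool) {t : List L} (h : afterX t) :
    Fe ε t = some (false, true) ∨ Fe ε t = some (true, true) := by
  rcases afterX_shape h with ⟨t2, rfl, h2⟩ | ⟨t2, rfl⟩
  · left
    rcases afterX_shape h2 with ⟨t3, rfl, _⟩ | ⟨t3, rfl⟩ <;> cases ε <;> simp [Fe]
  · right; simp [Fe]

lemma F1_afterX {t : List L} (h : afterX t) :
    F1 t = some (false, true) ∨ F1 t = some (true, true) ∨ F1 t = some (false, false) := by
  rcases afterX_shape h with ⟨t2, rfl, _⟩ | ⟨t2, rfl⟩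
  · left; simp [F1]
  · rcases F1_yp_head t2 with h1 | h1
    · exact Or.inr (Or.inr h1)
    · exact Or.inr (Or.inl h1)

lemma afterX_app_e (ε : Bool) :
    ∀ n (t : List L), t.length ≤ n → Red t → afterX t → afterX (app (fe ε) t) := by
  intro n
  induction n with
  | zero =>
    intro t hl _ h
    have ht : t = [] := by cases t <;> simp_all
    subst ht; simp at h
  | succ n ih =>
    intro t hl hr h
    rcases afterX_shape h with ⟨t2, rfl, h2⟩ | ⟨t2, rfl⟩
    · have happ : app (fe ε) ((false, true) :: t2) = cons' (false, true) (app (fe ε) t2) := rfl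
      have hm := master_e' ε (red_tail hr)
      have hne : (app (fe ε) t2).head? ≠ some (linv (false, true)) := by
        rw [hm]; rcases Fe_afterX ε h2 with h3 | h3 <;> simp [h3, linv]
      rw [happ, cons'_of_ne hne, afterX_xp]
      exact ih t2 (by simp at hl; omega) (red_tail hr) h2
    · have hm := master_e' ε hr
      have hm2 : (app (fe ε) ((true, true) :: t2)).head? = some (true, true) := by
        rw [hm]; rfl
      obtain ⟨z', hz⟩ := eq_cons_of_head? hm2
      rw [hz]; simp

lemma CL_e (ε : Bool) {w : List L} (hr : Red w) (h : inS w) : inS (app (fe ε) w) := by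
  rcases w with _ | ⟨⟨g, s⟩, t⟩
  · simp at h
  · cases g <;> cases s <;> simp at h
    have happ : app (fe ε) ((false, true) :: t) = cons' (false, true) (app (fe ε) t) := rfl
    have hm := master_e' ε (red_tail hr)
    have hne : (app (fe ε) t).head? ≠ some (linv (false, true)) := by
      rw [hm]; rcases Fe_afterX ε h with h3 | h3 <;> simp [h3, linv]
    rw [happ, cons'_of_ne hne, inS_xp]
    exact afterX_app_e ε t.length t le_rfl (red_tail hr) h

lemma CL_1 {w : List L} (hr : Red w) (h : inS w) : inS (app f1 w) := by
  rcases w with _ | ⟨⟨g, s⟩, t⟩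
  · simp at h
  · cases g <;> cases s <;> simp at h
    have happ : app f1 ((false, true) :: t) =
        cons' (false, true) (cons' (true, true) (app f1 t)) := rfl
    have hm := master_1' (red_tail hr)
    have hne : (app f1 t).head? ≠ some (linv (true, true)) := by
      rw [hm]; rcases F1_afterX h with h3 | h3 | h3 <;> simp [h3, linv]
    rw [happ, cons'_of_ne hne, cons'_of_ne (by simp [linv])]
    simp

/-- reduced words -/
def RW := {w : List L // Red w}

def pe1 : Equiv.Perm RW where
  toFun w := ⟨app f1 w.1, red_app _ _⟩
  invFun w := ⟨app f1i w.1, red_app _ _⟩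
  left_inv w := Subtype.ext (by
    show app f1i (app f1 w.1) = w.1
    rw [app_app invComp_f1i]
    exact app_id (by intro l; revert l; decide) w.2)
  right_inv w := Subtype.ext (by
    show app f1 (app f1i w.1) = w.1
    rw [app_app invComp_f1]
    exact app_id (by intro l; revert l; decide) w.2)

def pe2 : Equiv.Perm RW where
  toFun w := ⟨app (fe false) w.1, red_app _ _⟩
  invFun w := ⟨app (fe true) w.1, red_app _ _⟩
  left_inv w := Subtype.ext (by
    show app (fe true) (app (fe false) w.1) = w.1
    rw [app_app (invComp_fe true)]
    exact app_id (by intro l; revert l; decide) w.2)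
  right_inv w := Subtype.ext (by
    show app (fe false) (app (fe true) w.1) = w.1
    rw [app_app (invComp_fe false)]
    exact app_id (by intro l; revert l; decide) w.2)

lemma braid_fun (v : List L) :
    app f1 (app (fe false) (app f1 v)) = app (fe false) (app f1 (app (fe false) v)) := by
  rw [app_app (invComp_fe false) v, app_app invComp_f1 v,
    app_app invComp_f1 v, app_app (invComp_fe false) v]
  have hC : (fun l => app f1 (app (fe false) (f1 l))) =
      (fun l => app (fe false) (app f1 (fe false l))) := by
    funext l; revert l; decide
  rw [hC]

lemma braid_perm : pe1 * pe2 * pe1 = pe2 * pe1 * pe2 := by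
  apply Equiv.ext
  intro v
  simp only [Equiv.Perm.mul_apply]
  exact Subtype.ext (braid_fun v.1)

def Fgen : Fin 2 → Equiv.Perm RW := ![pe1, pe2]

lemma rels_check : ∀ r ∈ braidRels 2, FreeGroup.lift Fgen r = 1 := by
  rintro r (⟨i, j, hij, rfl⟩ | ⟨i, j, hij, rfl⟩)
  · have hj2 : (j : ℕ) < 2 := j.isLt
    have hi : i = ⟨0, by norm_num⟩ := Fin.ext (by show (i:ℕ) = 0; omega)
    have hjj : j = ⟨1, by norm_num⟩ := Fin.ext (by show (j:ℕ) = 1; omega)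
    subst hi; subst hjj
    simp only [map_mul, map_inv, FreeGroup.lift_apply_of]
    rw [mul_inv_eq_one]
    show Fgen _ * Fgen _ * Fgen _ = Fgen _ * Fgen _ * Fgen _
    have h0 : Fgen ⟨0, by norm_num⟩ = pe1 := rfl
    have h1 : Fgen ⟨1, by norm_num⟩ = pe2 := rfl
    rw [h0, h1]
    exact braid_perm
  · exfalso
    have := j.isLt
    omega

def Φ : BraidGroup 3 →* Equiv.Perm RW := PresentedGroup.toGroup rels_check

def gp (p : ℕ × Bool) : Equiv.Perm RW :=
  if p.1 = 0 then (if p.2 then pe1 else pe1⁻¹) else (if p.2 then pe2 else pe2⁻¹)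

def act (w : List (ℕ × Bool)) (v : RW) : RW := w.foldr (fun p acc => gp p acc) v

lemma Φ_gen0 : Φ (braidGen 3 0) = pe1 := by
  have h : (0 : ℕ) < 3 - 1 := by norm_num
  rw [braidGen, dif_pos h]
  exact PresentedGroup.toGroup.of rels_check

lemma Φ_gen1 : Φ (braidGen 3 1) = pe2 := by
  have h : (1 : ℕ) < 3 - 1 := by norm_num
  rw [braidGen, dif_pos h]
  exact PresentedGroup.toGroup.of rels_check

lemma Φ_eval : ∀ w, ValidWord3 w → ∀ v : RW, Φ (evalWord 3 w) v = act w v := by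
  intro w
  induction w with
  | nil =>
    intro _ v
    have : evalWord 3 [] = 1 := by simp [evalWord]
    rw [this, map_one]
    rfl
  | cons p w ih =>
    intro hv v
    have hw : ValidWord3 w := fun l hl => hv l (List.mem_cons_of_mem _ hl)
    have h1 : evalWord 3 (p :: w) =
        (if p.2 then braidGen 3 p.1 else (braidGen 3 p.1)⁻¹) * evalWord 3 w := by
      simp [evalWord]
    rw [h1, map_mul, Equiv.Perm.mul_apply, ih hw]
    have hp : p.1 < 2 := hv p (List.mem_cons_self)
    show Φ _ (act w v) = act (p :: w) v
    have hact : act (p :: w) v = gp p (act w v) := rfl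
    rw [hact]
    congr 1
    rcases p with ⟨i, b⟩
    interval_cases i <;> cases b <;>
      simp [gp, Φ_gen0, Φ_gen1, map_inv]

def X0 : RW := ⟨[(false, true)], Red.single _⟩

lemma act_neutral : ∀ w, ValidWord3 w → A ∉ w → A' ∉ w → act w X0 = X0 := by
  intro w
  induction w with
  | nil => intro _ _ _; rfl
  | cons p w ih =>
    intro hv hA hA'
    have hw : ValidWord3 w := fun l hl => hv l (List.mem_cons_of_mem _ hl)
    have hAw : A ∉ w := fun hm => hA (List.mem_cons_of_mem _ hm)
    have hA'w : A' ∉ w := fun hm => hA' (List.mem_cons_of_mem _ hm)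
    have hact : act (p :: w) X0 = gp p (act w X0) := rfl
    rw [hact, ih hw hAw hA'w]
    have hp : p.1 < 2 := hv p (List.mem_cons_self)
    rcases p with ⟨i, b⟩
    have hpA : (i, b) ≠ A := fun he => hA (he ▸ List.mem_cons_self)
    have hpA' : (i, b) ≠ A' := fun he => hA' (he ▸ List.mem_cons_self)
    have hi : i = 1 := by
      rcases b with _ | _
      · rcases (show i = 0 ∨ i = 1 by omega) with h0 | h1
        · exact absurd (by rw [h0]; rfl) hpA'
        · exact h1
      · rcases (show i = 0 ∨ i = 1 by omega) with h0 | h1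
        · exact absurd (by rw [h0]; rfl) hpA
        · exact h1
    subst hi
    cases b <;> exact Subtype.ext rfl

lemma act_pos : ∀ w, ValidWord3 w → A' ∉ w → A ∈ w → inS (act w X0).1 := by
  intro w
  induction w with
  | nil => intro _ _ hA; simp at hA
  | cons p w ih =>
    intro hv hA' hA
    have hw : ValidWord3 w := fun l hl => hv l (List.mem_cons_of_mem _ hl)
    have hA'w : A' ∉ w := fun hm => hA' (List.mem_cons_of_mem _ hm)
    have hact : act (p :: w) X0 = gp p (act w X0) := rfl
    have hp : p.1 < 2 := hv p (List.mem_cons_self)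
    have hpA' : p ≠ A' := fun he => hA' (he ▸ List.mem_cons_self)
    by_cases hAw : A ∈ w
    · have hS := ih hw hA'w hAw
      have hRed := (act w X0).2
      rcases p with ⟨i, b⟩
      rcases (show i = 0 ∨ i = 1 by omega) with h0 | h1
      · subst h0
        cases b
        · exact absurd rfl hpA'
        · rw [hact]
          show inS (app f1 (act w X0).1)
          exact CL_1 hRed hS
      · subst h1
        cases b
        · rw [hact]
          show inS (app (fe true) (act w X0).1)
          exact CL_e true hRed hS
        · rw [hact]
          show inS (app (fe false) (act w X0).1)
          exact CL_e false hRed hS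
    · have hpA : p = A := by
        rcases List.mem_cons.mp hA with h | h
        · exact h.symm
        · exact absurd h hAw
      subst hpA
      rw [hact, act_neutral w hw hAw hA'w]
      show inS (app f1 [(false, true)])
      simp [app, mulW, cons', f1, linv]

lemma key (w : List (ℕ × Bool)) (hv : ValidWord3 w) (hA : A ∈ w) (hA' : A' ∉ w) :
    evalWord 3 w ≠ 1 := by
  intro h1
  have h2 := Φ_eval w hv X0
  rw [h1, map_one] at h2
  have h3 := act_pos w hv hA' hA
  rw [← h2] at h3
  exact h3

def winv (w : List (ℕ × Bool)) : List (ℕ × Bool) := (w.map (fun p => (p.1, !p.2))).reverse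

lemma evalWord_append (a b : List (ℕ × Bool)) :
    evalWord 3 (a ++ b) = evalWord 3 a * evalWord 3 b := by
  simp [evalWord]

lemma evalWord_winv (w : List (ℕ × Bool)) : evalWord 3 (winv w) = (evalWord 3 w)⁻¹ := by
  induction w with
  | nil => simp [winv, evalWord]
  | cons p w ih =>
    have h1 : winv (p :: w) = winv w ++ [(p.1, !p.2)] := by simp [winv]
    rw [h1, evalWord_append, ih]
    have h2 : evalWord 3 (p :: w) =
        (if p.2 then braidGen 3 p.1 else (braidGen 3 p.1)⁻¹) * evalWord 3 w := by
      simp [evalWord]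
    rw [h2, mul_inv_rev]
    congr 1
    cases hb : p.2 <;> simp [evalWord, hb]

end Dh


/-- in `B_3`, a `σ_1`-positive word and a `σ_1`-negative word never represent
the same element. -/
theorem stmt9 (w w' : List (ℕ × Bool)) (h : SigmaOnePos w) (h' : SigmaOneNeg w') :
    evalWord 3 w ≠ evalWord 3 w' := by
  intro heq
  have hval : ValidWord3 (w ++ Dh.winv w') := by
    intro l hl
    rcases List.mem_append.mp hl with h1 | h2
    · exact h.1 l h1
    · simp only [Dh.winv, List.mem_reverse, List.mem_map] at h2
      obtain ⟨p, hp, rfl⟩ := h2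
      exact h'.1 p hp
  have hA : A ∈ w ++ Dh.winv w' := List.mem_append_left _ h.2.1
  have hA' : A' ∉ w ++ Dh.winv w' := by
    intro hmem
    rcases List.mem_append.mp hmem with h1 | h2
    · exact h.2.2 h1
    · simp only [Dh.winv, List.mem_reverse, List.mem_map] at h2
      obtain ⟨⟨i, b⟩, hp, he⟩ := h2
      have hi : i = 0 ∧ b = true := by
        have h3 : (i, !b) = A' := he
        rw [show A' = (0, false) from rfl] at h3
        cases b <;> simp_all
      obtain ⟨rfl, rfl⟩ := hi
      exact h'.2.2 hp
  apply Dh.key _ hval hA hA'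
  rw [Dh.evalWord_append, Dh.evalWord_winv, heq]
  exact mul_inv_cancel _
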